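/- (Sufficient and necessary condition for direct ballistic capture.) Assume 0 < r_f < 1 and r_f³ ≤ 2μ. For every α ∈ ℝ and every V ≥ 0, let C = W(α) − V² denote the Jacobi energy of the direct insertion state D(α,V). Then the Keplerian energy with respect to the Moon of D(α,V) satisfies E ≤ 0 if and only if C_D*(α) ≤ C ≤ W(α), where C_D*(α) = G(α) − 2r_f² + 2√(2μ·r_f). -/
import Mathlib


/-- Keplerian energy with respect to the Moon. -/
noncomputable def kepE (μ x y u v : ℝ) : ℝ :=
  (1 / 2) * ((u - y) ^ 2 + (v + x + μ - 1) ^ 2)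
    - μ / Real.sqrt ((x + μ - 1) ^ 2 + y ^ 2)

/-- The function W(α). -/
noncomputable def Wfun (μ rf α : ℝ) : ℝ :=
  (rf * Real.cos α + 1 - μ) ^ 2 + (rf * Real.sin α) ^ 2
    + 2 * (1 - μ) / Real.sqrt (1 + 2 * rf * Real.cos α + rf ^ 2)
    + 2 * μ / rf + μ * (1 - μ)

/-- The function G(α). -/
noncomputable def Gfun (μ rf α : ℝ) : ℝ :=
  2 * rf ^ 2 + 2 * (1 - μ) * (rf * Real.cos α + 1 - μ)
    + (1 - μ) * (2 * μ - 1)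
    + 2 * (1 - μ) / Real.sqrt (1 + 2 * rf * Real.cos α + rf ^ 2)

/-- Critical Jacobi energy for direct insertion. -/
noncomputable def CDstar (μ rf α : ℝ) : ℝ :=
  Gfun μ rf α - 2 * rf ^ 2 + 2 * Real.sqrt (2 * μ * rf)

lemma sq_cond_iff (s rf V : ℝ) (hrf0 : 0 < rf) (hs0 : 0 ≤ s) (hsr : rf ≤ s)
    (hV : 0 ≤ V) : (V + rf) ^ 2 ≤ s ^ 2 ↔ V ^ 2 ≤ s ^ 2 + rf ^ 2 - 2 * rf * s := by
  constructor
  · intro h1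
    have h2 : V + rf ≤ s := by nlinarith
    nlinarith
  · intro h2
    have h3 : V ≤ s - rf := by nlinarith
    nlinarith

/-- Sufficient and necessary condition for direct ballistic capture. -/
theorem direct_ballistic_capture_iff
    (μ rf : ℝ) (hμ0 : 0 < μ) (hμ1 : μ < 1) (hrf0 : 0 < rf) (hrf1 : rf < 1)
    (hrf3 : rf ^ 3 ≤ 2 * μ) (α V : ℝ) (hV : 0 ≤ V) :
    kepE μ (rf * Real.cos α + 1 - μ) (rf * Real.sin α)
        (-V * Real.sin α) (V * Real.cos α) ≤ 0
      ↔ (CDstar μ rf α ≤ Wfun μ rf α - V ^ 2 ∧ Wfun μ rf α - V ^ 2 ≤ Wfun μ rf α) := by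
  obtain ⟨s, hs_def⟩ : ∃ s, Real.sqrt (2 * μ / rf) = s := ⟨_, rfl⟩
  have hs0 : 0 ≤ s := hs_def ▸ Real.sqrt_nonneg _
  have hs2 : s ^ 2 = 2 * μ / rf := by rw [← hs_def]; exact Real.sq_sqrt (by positivity)
  have hs2' : s ^ 2 * rf = 2 * μ := by rw [hs2]; field_simp
  have hsq : rf ^ 2 ≤ s ^ 2 := by nlinarith
  have hsr : rf ≤ s := by nlinarith
  have hcs : Real.sin α ^ 2 + Real.cos α ^ 2 = 1 := Real.sin_sq_add_cos_sq α
  have ht : Real.sqrt (2 * μ * rf) = rf * s := by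
    rw [show 2 * μ * rf = (rf * s) ^ 2 by rw [mul_pow]; nlinarith]
    exact Real.sqrt_sq (by positivity)
  have hr2 : Real.sqrt ((rf * Real.cos α + 1 - μ + μ - 1) ^ 2 + (rf * Real.sin α) ^ 2)
      = rf := by
    rw [show (rf * Real.cos α + 1 - μ + μ - 1) ^ 2 + (rf * Real.sin α) ^ 2 = rf ^ 2 by
      linear_combination rf ^ 2 * hcs]
    exact Real.sqrt_sq hrf0.le
  have hE : kepE μ (rf * Real.cos α + 1 - μ) (rf * Real.sin α)
      (-V * Real.sin α) (V * Real.cos α) = (V + rf) ^ 2 / 2 - μ / rf := by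
    rw [kepE, hr2]
    linear_combination ((V + rf) ^ 2 / 2) * hcs
  have hW : Wfun μ rf α - CDstar μ rf α = s ^ 2 + rf ^ 2 - 2 * rf * s := by
    rw [Wfun, CDstar, Gfun, ht]
    linear_combination -hs2 + rf ^ 2 * hcs
  have hEiff : kepE μ (rf * Real.cos α + 1 - μ) (rf * Real.sin α)
      (-V * Real.sin α) (V * Real.cos α) ≤ 0 ↔ (V + rf) ^ 2 ≤ s ^ 2 := by
    rw [hE, hs2, sub_nonpos, div_le_div_iff₀ (by norm_num) hrf0]
    constructor <;> intro h <;> nlinarith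
  rw [hEiff, sq_cond_iff s rf V hrf0 hs0 hsr hV]
  constructor
  · intro h
    exact ⟨by linarith, by nlinarith [sq_nonneg V]⟩
  · rintro ⟨h1, -⟩
    linarith
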